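/- Let A be a finitely generated subalgebra of M([0,1]^n) that separates points of [0,1]^n and is distinct from M([0,1]^n). Then for every weighted triangulation (Δ,(a_1,…,a_u)) of [0,1]^n such that H_{Δ,a} is a basic set generating A, there exists j ∈ {1,…,u} with a_j ≠ 1. -/

import Mathlib

namespace MVPaper

/-- The unit `n`-cube `[0,1]^n` as a subset of `ℝ^n`. -/
def Cube (n : ℕ) : Set (Fin n → ℝ) := {x | ∀ i, 0 ≤ x i ∧ x i ≤ 1}

/-- An affine function `ℝ^n → ℝ` with integer coefficients. -/
def IsIntAffine {n : ℕ} (l : (Fin n → ℝ) → ℝ) : Prop :=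
  ∃ (b : ℤ) (m : Fin n → ℤ), ∀ x, l x = (b : ℝ) + ∑ j, (m j : ℝ) * x j

/-- An affine function `ℝ^n → ℝ` with arbitrary real coefficients. -/
def IsRealAffine {n : ℕ} (l : (Fin n → ℝ) → ℝ) : Prop :=
  ∃ (b : ℝ) (m : Fin n → ℝ), ∀ x, l x = b + ∑ j, m j * x j

/-- A McNaughton function on `[0,1]^n`: continuous, `[0,1]`-valued, and at every
point it agrees with one of finitely many integer affine functions. -/
def IsMcNaughton {n : ℕ} (f : Cube n → ℝ) : Prop :=
  Continuous f ∧ (∀ x, 0 ≤ f x ∧ f x ≤ 1) ∧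
    ∃ (t : ℕ) (l : Fin t → ((Fin n → ℝ) → ℝ)),
      (∀ i, IsIntAffine (l i)) ∧ ∀ x : Cube n, ∃ i, f x = l i (x : Fin n → ℝ)

/-- `M([0,1]^n)`: the set of all McNaughton functions on the `n`-cube. -/
def McNn (n : ℕ) : Set (Cube n → ℝ) := {f | IsMcNaughton f}

/-! ### Pointwise MV-operations on `[0,1]`-valued functions -/

def mvZero (α : Type*) : α → ℝ := fun _ => 0
def mvAdd {α : Type*} (f g : α → ℝ) : α → ℝ := fun x => min (f x + g x) 1
def mvNeg {α : Type*} (f : α → ℝ) : α → ℝ := fun x => 1 - f x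

/-- A set of functions containing the constant `0` and closed under the pointwise
MV-operations `⊕` and `¬`. -/
def MVClosed {α : Type*} (A : Set (α → ℝ)) : Prop :=
  mvZero α ∈ A ∧ (∀ f ∈ A, ∀ g ∈ A, mvAdd f g ∈ A) ∧ ∀ f ∈ A, mvNeg f ∈ A

/-- The subalgebra generated by `S`: the smallest set containing `S`, containing the
constant `0` and closed under the pointwise MV-operations. -/
def mvGen {α : Type*} (S : Set (α → ℝ)) : Set (α → ℝ) :=
  ⋂₀ {A : Set (α → ℝ) | MVClosed A ∧ S ⊆ A}

/-- A set of functions separates points. -/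
def Separates {α β : Type*} (S : Set (α → β)) : Prop :=
  ∀ x y : α, x ≠ y → ∃ f ∈ S, f x ≠ f y

/-! ### Abstract MV-algebras -/

/-- Signature of an MV-algebra: a constant `0`, a binary `⊕` and a unary `¬`. -/
structure MVStr (α : Type*) where
  zero : α
  add : α → α → α
  neg : α → α

/-- The MV-algebra axioms. -/
def MVStr.IsMV {α : Type*} (M : MVStr α) : Prop :=
  (∀ x y z, M.add (M.add x y) z = M.add x (M.add y z)) ∧
  (∀ x y, M.add x y = M.add y x) ∧
  (∀ x, M.add x M.zero = x) ∧
  (∀ x, M.neg (M.neg x) = x) ∧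
  (∀ x, M.add x (M.neg M.zero) = M.neg M.zero) ∧
  ∀ x y, M.add (M.neg (M.add (M.neg x) y)) y = M.add (M.neg (M.add (M.neg y) x)) x

/-- Homomorphism of abstract MV-algebras. -/
def IsMVHom {α β : Type*} (M : MVStr α) (N : MVStr β) (φ : α → β) : Prop :=
  φ M.zero = N.zero ∧ (∀ x y, φ (M.add x y) = N.add (φ x) (φ y)) ∧
    ∀ x, φ (M.neg x) = N.neg (φ x)

/-- Homomorphism from a set of `[0,1]`-valued functions (with the pointwise
MV-operations) into an abstract MV-algebra. -/
def IsMVHomOfSet {α γ : Type*} (B : Set (α → ℝ)) (Mc : MVStr γ) (h : B → γ) : Prop :=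
  (∀ f : B, (f : α → ℝ) = mvZero α → h f = Mc.zero) ∧
  (∀ f g k : B, (k : α → ℝ) = mvAdd (f : α → ℝ) (g : α → ℝ) → h k = Mc.add (h f) (h g)) ∧
  ∀ f g : B, (g : α → ℝ) = mvNeg (f : α → ℝ) → h g = Mc.neg (h f)

/-- Projectivity of an MV-algebra of `[0,1]`-valued functions: every homomorphism
into the quotient of a surjective homomorphism lifts. -/
def IsProjectiveMVSet {α : Type*} (A : Set (α → ℝ)) : Prop :=
  ∀ (β γ : Type*) (Mb : MVStr β) (Mc : MVStr γ), Mb.IsMV → Mc.IsMV →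
    ∀ ψ : β → γ, IsMVHom Mb Mc ψ → Function.Surjective ψ →
      ∀ φ : A → γ, IsMVHomOfSet A Mc φ →
        ∃ θ : A → β, IsMVHomOfSet A Mb θ ∧ ∀ f, ψ (θ f) = φ f

/-- `A` is an epi-subalgebra of the function MV-algebra `B`: any two MV-homomorphisms
out of `B` agreeing on `A` are equal. -/
def IsEpiSub {α : Type*} (A B : Set (α → ℝ)) : Prop :=
  A ⊆ B ∧
    ∀ (γ : Type*) (Mc : MVStr γ), Mc.IsMV →
      ∀ h g : B → γ, IsMVHomOfSet B Mc h → IsMVHomOfSet B Mc g →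
        (∀ f : B, (f : α → ℝ) ∈ A → h f = g f) → h = g

/-- MV-isomorphism between two sets of `[0,1]`-valued functions, each equipped with
the pointwise MV-operations: a bijection preserving `0`, `⊕` and `¬`. -/
def MVIsoSets {α β : Type*} (A : Set (α → ℝ)) (B : Set (β → ℝ)) : Prop :=
  ∃ φ : A → B, Function.Bijective φ ∧
    (∀ f : A, (f : α → ℝ) = mvZero α → (φ f : β → ℝ) = mvZero β) ∧
    (∀ f g k : A, (k : α → ℝ) = mvAdd (f : α → ℝ) (g : α → ℝ) →
      (φ k : β → ℝ) = mvAdd (φ f : β → ℝ) (φ g : β → ℝ)) ∧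
    ∀ f g : A, (g : α → ℝ) = mvNeg (f : α → ℝ) → (φ g : β → ℝ) = mvNeg (φ f : β → ℝ)

/-! ### Rational polyhedra and `M(P)` -/

def IsRatPoint {n : ℕ} (x : Fin n → ℝ) : Prop := ∀ i, ∃ q : ℚ, x i = (q : ℝ)

/-- A rational polyhedron in `[0,1]^n`: a finite union of convex hulls of finite
sets of rational points of the cube. -/
def IsRatPolyhedron {n : ℕ} (P : Set (Fin n → ℝ)) : Prop :=
  ∃ V : Finset (Finset (Fin n → ℝ)),
    (∀ S ∈ V, ∀ v ∈ S, v ∈ Cube n ∧ IsRatPoint v) ∧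
    P = ⋃ S ∈ V, convexHull ℝ (S : Set (Fin n → ℝ))

/-- Restriction of a function on the cube to a subset `P` of the cube. -/
def restrictCube {n : ℕ} {P : Set (Fin n → ℝ)} (hP : P ⊆ Cube n) (f : Cube n → ℝ) :
    P → ℝ :=
  fun x => f ⟨x.1, hP x.2⟩

/-- `M(P)`: restrictions to `P` of McNaughton functions on `[0,1]^n`. -/
def McNP {n : ℕ} {P : Set (Fin n → ℝ)} (hP : P ⊆ Cube n) : Set (P → ℝ) :=
  {f | ∃ g : Cube n → ℝ, IsMcNaughton g ∧ f = restrictCube hP g}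

/-! ### Z-maps and Z-homeomorphisms -/

def IsIntAffineVec {n k : ℕ} (L : (Fin n → ℝ) → (Fin k → ℝ)) : Prop :=
  ∀ j, IsIntAffine fun x => L x j

/-- A Z-map between subsets of cubes: continuous and at every point agreeing with
one of finitely many integer affine maps. -/
def IsZMap {n k : ℕ} (P : Set (Fin n → ℝ)) (Q : Set (Fin k → ℝ)) (η : P → Q) : Prop :=
  Continuous η ∧
    ∃ (t : ℕ) (L : Fin t → ((Fin n → ℝ) → (Fin k → ℝ))),
      (∀ i, IsIntAffineVec (L i)) ∧ ∀ x : P, ∃ i, (η x : Fin k → ℝ) = L i (x : Fin n → ℝ)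

/-- A Z-homeomorphism of `P` onto `Q`: a bijective Z-map whose inverse is a Z-map. -/
def IsZHomeo {n k : ℕ} (P : Set (Fin n → ℝ)) (Q : Set (Fin k → ℝ)) (η : P → Q) : Prop :=
  IsZMap P Q η ∧ Function.Bijective η ∧
    ∃ θ : Q → P, IsZMap Q P θ ∧ (∀ x, θ (η x) = x) ∧ ∀ y, η (θ y) = y

def ZHomeomorphic {n k : ℕ} (P : Set (Fin n → ℝ)) (Q : Set (Fin k → ℝ)) : Prop :=
  ∃ η : P → Q, IsZHomeo P Q η

/-- Corestriction of a map `η : P → Q` to its image (as a subset of `ℝ^k`). -/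
def corestrict {n k : ℕ} {P : Set (Fin n → ℝ)} {Q : Set (Fin k → ℝ)} (η : P → Q) :
    P → ↥(Subtype.val '' Set.range η) :=
  fun x => ⟨(η x : Fin k → ℝ), ⟨η x, ⟨x, rfl⟩, rfl⟩⟩

/-! ### Denominators, homogeneous correspondents, regular simplexes -/

/-- The denominator of a rational point: the least positive integer `d` such that
`d·x` has integer coordinates. -/
noncomputable def den {n : ℕ} (x : Fin n → ℝ) : ℕ :=
  sInf {d : ℕ | 0 < d ∧ ∀ i, ∃ c : ℤ, (d : ℝ) * x i = (c : ℝ)}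

/-- The homogeneous correspondent `x̃ = (den(x)·x, den(x)) ∈ ℤ^{n+1}` of a rational
point `x`. -/
noncomputable def tilde {n : ℕ} (x : Fin n → ℝ) : Fin (n + 1) → ℤ :=
  fun i => if h : (i : ℕ) < n then ⌊(den x : ℝ) * x ⟨(i : ℕ), h⟩⌋ else (den x : ℤ)

/-- A set of integer vectors extends to a basis of the free abelian group `ℤ^{n+1}`. -/
def ExtendsToBasis {n : ℕ} (S : Set (Fin (n + 1) → ℤ)) : Prop :=
  ∃ b : Module.Basis (Fin (n + 1)) ℤ (Fin (n + 1) → ℤ), S ⊆ Set.range b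

/-! ### Rational triangulations of the cube, weights, hats -/

/-- A rational triangulation of `[0,1]^n`, presented as the finite set of the vertex
sets of its simplexes. -/
def IsTriangulation {n : ℕ} (Δ : Finset (Finset (Fin n → ℝ))) : Prop :=
  letI := Classical.decEq (Fin n → ℝ)
  (∀ S ∈ Δ, S.Nonempty ∧ (∀ v ∈ S, v ∈ Cube n ∧ IsRatPoint v) ∧
      AffineIndependent ℝ (fun v : (S : Set (Fin n → ℝ)) => (v : Fin n → ℝ))) ∧
  (⋃ S ∈ Δ, convexHull ℝ (S : Set (Fin n → ℝ))) = Cube n ∧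
  (∀ S ∈ Δ, ∀ S' : Finset (Fin n → ℝ), S' ⊆ S → S'.Nonempty → S' ∈ Δ) ∧
  ∀ S ∈ Δ, ∀ T ∈ Δ,
    convexHull ℝ (S : Set (Fin n → ℝ)) ∩ convexHull ℝ (T : Set (Fin n → ℝ)) =
      convexHull ℝ ((S ∩ T : Finset (Fin n → ℝ)) : Set (Fin n → ℝ))

/-- The vertex set of a triangulation. -/
noncomputable def vertexSet {n : ℕ} (Δ : Finset (Finset (Fin n → ℝ))) :
    Finset (Fin n → ℝ) :=
  letI := Classical.decEq (Fin n → ℝ)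
  Δ.sup id

/-- A regular (unimodular) triangulation: all simplexes are regular. -/
def IsRegularTriangulation {n : ℕ} (Δ : Finset (Finset (Fin n → ℝ))) : Prop :=
  IsTriangulation Δ ∧ ∀ S ∈ Δ, ExtendsToBasis (tilde '' (S : Set (Fin n → ℝ)))

/-- A weighted triangulation: each vertex `v` carries a positive weight dividing
`den v`. -/
def IsWeighted {n : ℕ} (Δ : Finset (Finset (Fin n → ℝ))) (a : (Fin n → ℝ) → ℕ) : Prop :=
  IsTriangulation Δ ∧ ∀ v ∈ vertexSet Δ, 0 < a v ∧ a v ∣ den v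

/-- The hat of a weighted triangulation at the vertex `v`: `[0,1]`-valued, affine on
each simplex of `Δ`, with value `a v / den v` at `v` and `0` at all other vertices. -/
def IsHat {n : ℕ} (Δ : Finset (Finset (Fin n → ℝ))) (a : (Fin n → ℝ) → ℕ)
    (v : Fin n → ℝ) (h : Cube n → ℝ) : Prop :=
  (∀ x, 0 ≤ h x ∧ h x ≤ 1) ∧
  (∀ S ∈ Δ, ∃ l : (Fin n → ℝ) → ℝ, IsRealAffine l ∧
      ∀ x : Cube n, (x : Fin n → ℝ) ∈ convexHull ℝ (S : Set (Fin n → ℝ)) → h x = l x) ∧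
  (∀ x : Cube n, (x : Fin n → ℝ) = v → h x = (a v : ℝ) / (den v : ℝ)) ∧
  ∀ x : Cube n, (x : Fin n → ℝ) ∈ vertexSet Δ → (x : Fin n → ℝ) ≠ v → h x = 0

/-- A family assigning to each vertex of `Δ` its hat. -/
def IsHatFamily {n : ℕ} (Δ : Finset (Finset (Fin n → ℝ))) (a : (Fin n → ℝ) → ℕ)
    (h : (Fin n → ℝ) → Cube n → ℝ) : Prop :=
  ∀ v ∈ vertexSet Δ, IsHat Δ a v (h v)

/-- The set of hats `H_{Δ,a}` of a weighted triangulation. -/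
def hatSet {n : ℕ} (Δ : Finset (Finset (Fin n → ℝ)))
    (h : (Fin n → ℝ) → Cube n → ℝ) : Set (Cube n → ℝ) :=
  (fun v => h v) '' (vertexSet Δ : Set (Fin n → ℝ))

/-! ### Unital ℓ-groups of functions -/

/-- A set of real-valued functions which is a subgroup closed under pointwise
`⊔`, `⊓` and containing the constant function `1`. -/
def LClosed {α : Type*} (G : Set (α → ℝ)) : Prop :=
  (fun _ => (0 : ℝ)) ∈ G ∧ (∀ f ∈ G, ∀ g ∈ G, f + g ∈ G) ∧ (∀ f ∈ G, -f ∈ G) ∧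
    (∀ f ∈ G, ∀ g ∈ G, f ⊔ g ∈ G) ∧ (∀ f ∈ G, ∀ g ∈ G, f ⊓ g ∈ G) ∧
    (fun _ => (1 : ℝ)) ∈ G

/-- The unital ℓ-subgroup generated by `S`. -/
def lGen {α : Type*} (S : Set (α → ℝ)) : Set (α → ℝ) := ⋂₀ {G | LClosed G ∧ S ⊆ G}

/-- A continuous piecewise integer affine real-valued function on the cube. -/
def IsMcNGroupFun {n : ℕ} (f : Cube n → ℝ) : Prop :=
  Continuous f ∧ ∃ (t : ℕ) (l : Fin t → ((Fin n → ℝ) → ℝ)),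
    (∀ i, IsIntAffine (l i)) ∧ ∀ x : Cube n, ∃ i, f x = l i (x : Fin n → ℝ)

/-- `McN_group([0,1]^n)`. -/
def McNGroup (n : ℕ) : Set (Cube n → ℝ) := {f | IsMcNGroupFun f}

/-- Signature of a unital ℓ-group. -/
structure ULStr (α : Type*) where
  zero : α
  add : α → α → α
  neg : α → α
  sup : α → α → α
  inf : α → α → α
  unit : α

def ULStr.nsmul {α : Type*} (M : ULStr α) : ℕ → α → α
  | 0, _ => M.zero
  | k + 1, a => M.add a (M.nsmul k a)

/-- The unital ℓ-group axioms: abelian group, lattice, translation invariance,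
`u ≥ 0`, and `u` is a strong order unit. -/
def ULStr.IsUL {α : Type*} (M : ULStr α) : Prop :=
  (∀ a b c, M.add (M.add a b) c = M.add a (M.add b c)) ∧
  (∀ a b, M.add a b = M.add b a) ∧
  (∀ a, M.add a M.zero = a) ∧
  (∀ a, M.add a (M.neg a) = M.zero) ∧
  (∀ a b, M.sup a b = M.sup b a) ∧
  (∀ a b c, M.sup (M.sup a b) c = M.sup a (M.sup b c)) ∧
  (∀ a b, M.inf a b = M.inf b a) ∧
  (∀ a b c, M.inf (M.inf a b) c = M.inf a (M.inf b c)) ∧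
  (∀ a b, M.sup a (M.inf a b) = a) ∧
  (∀ a b, M.inf a (M.sup a b) = a) ∧
  (∀ a b c, M.sup a b = b → M.sup (M.add a c) (M.add b c) = M.add b c) ∧
  M.sup M.unit M.zero = M.unit ∧
  ∀ g, ∃ m : ℕ, 0 < m ∧ M.sup g (M.nsmul m M.unit) = M.nsmul m M.unit

/-- Homomorphism of abstract unital ℓ-groups: preserves `+`, `⊔`, `⊓` and the unit. -/
def IsULHom {α β : Type*} (M : ULStr α) (N : ULStr β) (φ : α → β) : Prop :=
  (∀ a b, φ (M.add a b) = N.add (φ a) (φ b)) ∧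
  (∀ a b, φ (M.sup a b) = N.sup (φ a) (φ b)) ∧
  (∀ a b, φ (M.inf a b) = N.inf (φ a) (φ b)) ∧
  φ M.unit = N.unit

/-- Homomorphism from a set of real-valued functions (pointwise operations, constant
`1` as unit) into an abstract unital ℓ-group. -/
def IsULHomOfSet {α γ : Type*} (G : Set (α → ℝ)) (N : ULStr γ) (φ : G → γ) : Prop :=
  (∀ f g k : G, (k : α → ℝ) = (f : α → ℝ) + (g : α → ℝ) → φ k = N.add (φ f) (φ g)) ∧
  (∀ f g k : G, (k : α → ℝ) = (f : α → ℝ) ⊔ (g : α → ℝ) → φ k = N.sup (φ f) (φ g)) ∧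
  (∀ f g k : G, (k : α → ℝ) = (f : α → ℝ) ⊓ (g : α → ℝ) → φ k = N.inf (φ f) (φ g)) ∧
  ∀ f : G, (f : α → ℝ) = (fun _ => (1 : ℝ)) → φ f = N.unit

/-- Projectivity of a unital ℓ-group of functions. -/
def IsProjectiveULSet {α : Type*} (G : Set (α → ℝ)) : Prop :=
  ∀ (β γ : Type*) (Mb : ULStr β) (Mc : ULStr γ), Mb.IsUL → Mc.IsUL →
    ∀ ψ : β → γ, IsULHom Mb Mc ψ → Function.Surjective ψ →
      ∀ φ : G → γ, IsULHomOfSet G Mc φ →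
        ∃ θ : G → β, IsULHomOfSet G Mb θ ∧ ∀ f, ψ (θ f) = φ f

/-- Unital ℓ-isomorphism between two sets of real-valued functions with the pointwise
operations and the constant `1` as unit. -/
def ULIsoSets {α β : Type*} (G : Set (α → ℝ)) (H : Set (β → ℝ)) : Prop :=
  ∃ φ : G → H, Function.Bijective φ ∧
    (∀ f g k : G, (k : α → ℝ) = (f : α → ℝ) + (g : α → ℝ) →
      (φ k : β → ℝ) = (φ f : β → ℝ) + (φ g : β → ℝ)) ∧
    (∀ f g k : G, (k : α → ℝ) = (f : α → ℝ) ⊔ (g : α → ℝ) →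
      (φ k : β → ℝ) = (φ f : β → ℝ) ⊔ (φ g : β → ℝ)) ∧
    (∀ f g k : G, (k : α → ℝ) = (f : α → ℝ) ⊓ (g : α → ℝ) →
      (φ k : β → ℝ) = (φ f : β → ℝ) ⊓ (φ g : β → ℝ)) ∧
    ∀ f : G, (f : α → ℝ) = (fun _ => (1 : ℝ)) → (φ f : β → ℝ) = fun _ => (1 : ℝ)

/-! ### MV-terms, their encoding and their evaluation -/

/-- MV-terms: formal expressions built from variables and `0` by `¬` and `⊕`. -/
inductive MVTerm : Type
  | zero : MVTerm
  | var : ℕ → MVTerm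
  | neg : MVTerm → MVTerm
  | add : MVTerm → MVTerm → MVTerm

/-- A term only uses the variables `X_1, …, X_n`. -/
def MVTerm.Good (n : ℕ) : MVTerm → Prop
  | .zero => True
  | .var i => i < n
  | .neg t => t.Good n
  | .add s t => s.Good n ∧ t.Good n

/-- The McNaughton function `τ̂ : [0,1]^n → [0,1]` associated with a term `τ`. -/
noncomputable def MVTerm.eval (n : ℕ) : MVTerm → Cube n → ℝ
  | .zero => fun _ => 0
  | .var i => fun x => if h : i < n then (x : Fin n → ℝ) ⟨i, h⟩ else 0
  | .neg t => fun x => 1 - MVTerm.eval n t x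
  | .add s t => fun x => min (MVTerm.eval n s x + MVTerm.eval n t x) 1

/-- A canonical computable encoding of MV-terms as natural numbers. -/
def MVTerm.code : MVTerm → ℕ
  | .zero => 0
  | .var i => 4 * i + 1
  | .neg t => 4 * t.code + 2
  | .add s t => 4 * Nat.pair s.code t.code + 3

/-- Encoding of a finite list of MV-terms. -/
def encodeTerms (l : List MVTerm) : ℕ := Encodable.encode (l.map MVTerm.code)

/-- Encoding of an instance `(n, [τ_1, …, τ_k])`. -/
def encodeInstance (n : ℕ) (l : List MVTerm) : ℕ := Nat.pair n (encodeTerms l)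

/-- Encoding of an instance `(n, [τ_1, …, τ_k], [σ_1, …, σ_l])`. -/
def encodeInstance2 (n : ℕ) (l₁ l₂ : List MVTerm) : ℕ :=
  Nat.pair n (Nat.pair (encodeTerms l₁) (encodeTerms l₂))

/-- The set of McNaughton functions `{τ̂_1, …, τ̂_k}` of a list of terms. -/
def evalSet (n : ℕ) (l : List MVTerm) : Set (Cube n → ℝ) :=
  {f | ∃ τ ∈ l, f = MVTerm.eval n τ}

/-- The zeroset `Z_σ = σ̂⁻¹(0) ⊆ [0,1]^k` of the term `σ`. -/
def Zset (k : ℕ) (σ : MVTerm) : Set (Fin k → ℝ) :=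
  {x | ∃ h : x ∈ Cube k, MVTerm.eval k σ ⟨x, h⟩ = 0}

theorem Zset_subset_cube (k : ℕ) (σ : MVTerm) : Zset k σ ⊆ Cube k :=
  fun _ hx => hx.elim fun h _ => h

/-- `M(Z_σ)`: restrictions to the zeroset of `σ̂` of McNaughton functions. -/
def McNZ (k : ℕ) (σ : MVTerm) : Set ((Zset k σ) → ℝ) := McNP (Zset_subset_cube k σ)







variable {α : Type*} {B : Set (α → ℝ)}

/-- membership in `B` together with `[0,1]`-boundedness. -/
def Good (B : Set (α → ℝ)) (f : α → ℝ) : Prop :=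
  f ∈ B ∧ ∀ x, 0 ≤ f x ∧ f x ≤ 1

lemma good_zero (hB : MVClosed B) : Good B (fun _ => (0:ℝ)) := by
  refine ⟨hB.1, fun x => by norm_num⟩

lemma good_neg (hB : MVClosed B) {f : α → ℝ} (hf : Good B f) :
    Good B (fun x => 1 - f x) := by
  refine ⟨hB.2.2 f hf.1, fun x => ?_⟩
  have := hf.2 x
  simp only []
  constructor <;> [linarith [this.2]; linarith [this.1]]

lemma good_one (hB : MVClosed B) : Good B (fun _ => (1:ℝ)) := by
  have := good_neg hB (good_zero hB)
  simpa using this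

lemma good_add (hB : MVClosed B) {f g : α → ℝ} (hf : Good B f) (hg : Good B g) :
    Good B (fun x => min (f x + g x) 1) := by
  refine ⟨hB.2.1 f hf.1 g hg.1, fun x => ?_⟩
  have h1 := hf.2 x; have h2 := hg.2 x
  constructor
  · exact le_min (by linarith [h1.1, h2.1]) (by norm_num)
  · exact min_le_right _ _

lemma good_max (hB : MVClosed B) {f g : α → ℝ} (hf : Good B f) (hg : Good B g) :
    Good B (fun x => max (f x) (g x)) := by
  have h1 : Good B (fun x => 1 - f x) := good_neg hB hf
  have h2 : Good B (fun x => min ((1 - f x) + g x) 1) := good_add hB h1 hg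
  have h3 : Good B (fun x => 1 - min ((1 - f x) + g x) 1) := good_neg hB h2
  have h4 : Good B (fun x => min ((1 - min ((1 - f x) + g x) 1) + g x) 1) :=
    good_add hB h3 hg
  have : (fun x => min ((1 - min ((1 - f x) + g x) 1) + g x) 1)
      = fun x => max (f x) (g x) := by
    funext x
    have hfx := hf.2 x; have hgx := hg.2 x
    rcases le_total (f x) (g x) with h | h <;>
      rcases le_total ((1 - f x) + g x) 1 with h' | h' <;>
      simp [min_def, max_def] <;> split_ifs <;> linarith
  rwa [this] at h4

lemma good_min (hB : MVClosed B) {f g : α → ℝ} (hf : Good B f) (hg : Good B g) :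
    Good B (fun x => min (f x) (g x)) := by
  have h1 := good_max hB (good_neg hB hf) (good_neg hB hg)
  have h2 := good_neg hB h1
  have : (fun x => 1 - max (1 - f x) (1 - g x)) = fun x => min (f x) (g x) := by
    funext x
    rcases le_total (f x) (g x) with h | h <;> simp [min_def, max_def] <;>
      split_ifs <;> linarith
  rwa [this] at h2

/-- `⊙` (truncated product-sum): `max (f+g-1) 0`. -/
lemma good_odot (hB : MVClosed B) {f g : α → ℝ} (hf : Good B f) (hg : Good B g) :
    Good B (fun x => max (f x + g x - 1) 0) := by
  have h1 := good_add hB (good_neg hB hf) (good_neg hB hg)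
  have h2 := good_neg hB h1
  have : (fun x => 1 - min ((1 - f x) + (1 - g x)) 1) =
      fun x => max (f x + g x - 1) 0 := by
    funext x
    rcases le_total ((1 - f x) + (1 - g x)) 1 with h | h <;>
      simp [min_def, max_def] <;> split_ifs <;> linarith
  rwa [this] at h2

/-- a real sum of `Good` functions which is pointwise `≤ 1` is `Good`. -/
lemma good_sum {ι : Type*} (hB : MVClosed B) (T : Finset ι) (G : ι → α → ℝ)
    (hG : ∀ i ∈ T, Good B (G i))
    (hle : ∀ x, (∑ i ∈ T, G i x) ≤ 1) :
    Good B (fun x => ∑ i ∈ T, G i x) := by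
  classical
  induction T using Finset.induction with
  | empty => simpa using good_zero hB
  | @insert a T ha ih =>
    have hGa : Good B (G a) := hG a (Finset.mem_insert_self a T)
    have hGT : ∀ i ∈ T, Good B (G i) := fun i hi => hG i (Finset.mem_insert_of_mem hi)
    have hnonneg : ∀ x, ∀ i ∈ T, 0 ≤ G i x := fun x i hi => (hGT i hi).2 x |>.1
    have hrest_le : ∀ x, (∑ i ∈ T, G i x) ≤ 1 := by
      intro x
      have h0 : 0 ≤ G a x := (hGa.2 x).1
      have := hle x
      rw [Finset.sum_insert ha] at this
      linarith
    have ih' := ih hGT hrest_le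
    have hadd := good_add hB hGa ih'
    have : (fun x => min (G a x + ∑ i ∈ T, G i x) 1) =
        fun x => ∑ i ∈ insert a T, G i x := by
      funext x
      rw [Finset.sum_insert ha]
      exact min_eq_left (by simpa [Finset.sum_insert ha] using hle x)
    rwa [this] at hadd

/-- a natural multiple of a `Good` function which is pointwise `≤ 1` is `Good`. -/
lemma good_nsmul (hB : MVClosed B) {f : α → ℝ} (hf : Good B f) (c : ℕ)
    (hle : ∀ x, (c : ℝ) * f x ≤ 1) : Good B (fun x => (c : ℝ) * f x) := by
  have := good_sum hB (Finset.range c) (fun _ => f) (fun _ _ => hf)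
    (fun x => by simpa [Finset.sum_const, mul_comm] using hle x)
  simpa [Finset.sum_const, mul_comm] using this

lemma good_sup' {ι : Type*} (hB : MVClosed B) (T : Finset ι) (hT : T.Nonempty)
    (G : ι → α → ℝ) (hG : ∀ i ∈ T, Good B (G i)) :
    Good B (fun x => T.sup' hT (fun i => G i x)) := by
  classical
  induction hT using Finset.Nonempty.cons_induction with
  | singleton a => simpa using hG a (by simp)
  | cons a T ha hT ih =>
    have hGa : Good B (G a) := hG a (by simp)
    have ih' := ih (fun i hi => hG i (Finset.mem_cons_of_mem hi))
    have := good_max hB hGa ih'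
    have heq : (fun x => (Finset.cons a T ha).sup' (Finset.cons_nonempty ha) (fun i => G i x))
        = fun x => max (G a x) (T.sup' hT (fun i => G i x)) := by
      funext x; rw [Finset.sup'_cons hT]
    rw [heq]; exact this

lemma good_inf' {ι : Type*} (hB : MVClosed B) (T : Finset ι) (hT : T.Nonempty)
    (G : ι → α → ℝ) (hG : ∀ i ∈ T, Good B (G i)) :
    Good B (fun x => T.inf' hT (fun i => G i x)) := by
  classical
  induction hT using Finset.Nonempty.cons_induction with
  | singleton a => simpa using hG a (by simp)
  | cons a T ha hT ih =>
    have hGa : Good B (G a) := hG a (by simp)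
    have ih' := ih (fun i hi => hG i (Finset.mem_cons_of_mem hi))
    have := good_min hB hGa ih'
    have heq : (fun x => (Finset.cons a T ha).inf' (Finset.cons_nonempty ha) (fun i => G i x))
        = fun x => min (G a x) (T.inf' hT (fun i => G i x)) := by
      funext x; rw [Finset.inf'_cons hT]
    rw [heq]; exact this






/-- Two-point lemma: a continuous selection from finitely many affine functions on
`[u,v]` admits a piece lying above it at `u` and below it at `v`. -/
lemma two_point {ι : Type*} [DecidableEq ι] (g : ι → ℝ → ℝ)
    (hg : ∀ j, ∃ c d : ℝ, ∀ τ, g j τ = c + d * τ)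
    (F : ℝ → ℝ) (hF : Continuous F) :
    ∀ (A : Finset ι) (u v : ℝ), u ≤ v →
      (∀ τ ∈ Set.Icc u v, ∃ j ∈ A, F τ = g j τ) →
      ∃ j ∈ A, F u ≤ g j u ∧ g j v ≤ F v := by
  have hgc : ∀ j, Continuous (g j) := by
    intro j
    obtain ⟨c, d, h⟩ := hg j
    have : g j = fun τ => c + d * τ := funext h
    rw [this]; continuity
  intro A
  induction A using Finset.strongInduction with
  | _ A ih =>
    intro u v huv hsel
    obtain ⟨j0, hj0A, hj0⟩ := hsel u ⟨le_refl u, huv⟩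
    rcases eq_or_lt_of_le huv with rfl | huv'
    · exact ⟨j0, hj0A, hj0.le, hj0.ge⟩
    by_cases hv : g j0 v ≤ F v
    · exact ⟨j0, hj0A, hj0.le, hv⟩
    push_neg at hv
    set Z : Set ℝ := Set.Icc u v ∩ {τ | F τ = g j0 τ} with hZdef
    have hZclosed : IsClosed Z := isClosed_Icc.inter (isClosed_eq hF (hgc j0))
    have hZne : Z.Nonempty := ⟨u, ⟨le_refl u, huv⟩, hj0⟩
    have hZbdd : BddAbove Z := ⟨v, fun τ hτ => hτ.1.2⟩
    set z := sSup Z with hzdef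
    have hzZ : z ∈ Z := hZclosed.csSup_mem hZne hZbdd
    have hzIcc : z ∈ Set.Icc u v := hzZ.1
    have hzeq : F z = g j0 z := hzZ.2
    have hzv : z < v := by
      rcases lt_or_eq_of_le hzIcc.2 with h | h
      · exact h
      · exact absurd (h ▸ hzeq) (ne_of_lt hv)
    have hsign : ∀ τ ∈ Set.Ioc z v, F τ < g j0 τ := by
      intro τ hτ
      have hτIcc : τ ∈ Set.Icc u v := ⟨le_trans hzIcc.1 hτ.1.le, hτ.2⟩
      have hne : F τ ≠ g j0 τ := by
        intro h
        have : τ ∈ Z := ⟨hτIcc, h⟩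
        exact absurd (le_csSup hZbdd this) (not_le.mpr hτ.1)
      rcases lt_or_gt_of_ne hne with h | h
      · exact h
      · exfalso
        have hcont : ContinuousOn (fun σ => F σ - g j0 σ) (Set.Icc τ v) :=
          (hF.sub (hgc j0)).continuousOn
        have h0 : (0:ℝ) ∈ Set.Ioo (F v - g j0 v) (F τ - g j0 τ) :=
          ⟨by linarith, by linarith⟩
        obtain ⟨ρ, hρ, hρ0⟩ := intermediate_value_Ioo' hτ.2 hcont h0
        have hρ0' : F ρ - g j0 ρ = 0 := hρ0
        have hρZ : ρ ∈ Z := ⟨⟨le_trans hτIcc.1 hρ.1.le, hρ.2.le⟩, show F ρ = g j0 ρ by linarith⟩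
        have h1 := le_csSup hZbdd hρZ
        have h2 := hτ.1
        linarith [hρ.1]
    have hzsel : ∀ τ ∈ Set.Icc z v, ∃ j ∈ A.erase j0, F τ = g j τ := by
      have hW : IsClosed (⋃ j ∈ A.erase j0, {τ : ℝ | F τ = g j τ}) := by
        apply Set.Finite.isClosed_biUnion (Set.finite_mem_finset _)
        intro j _
        exact isClosed_eq hF (hgc j)
      have hsub : Set.Ioc z v ⊆ ⋃ j ∈ A.erase j0, {τ : ℝ | F τ = g j τ} := by
        intro τ hτ
        have hτIcc : τ ∈ Set.Icc u v := ⟨le_trans hzIcc.1 hτ.1.le, hτ.2⟩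
        obtain ⟨j, hjA, hj⟩ := hsel τ hτIcc
        have hjne : j ≠ j0 := by
          intro h; subst h
          exact absurd hj (ne_of_lt (hsign τ hτ))
        exact Set.mem_biUnion (Finset.mem_erase.mpr ⟨hjne, hjA⟩) hj
      intro τ hτ
      have : τ ∈ ⋃ j ∈ A.erase j0, {τ : ℝ | F τ = g j τ} := by
        have hcl : Set.Icc z v ⊆ closure (Set.Ioc z v) := by
          rw [closure_Ioc (ne_of_lt hzv)]
        exact (closure_minimal hsub hW) (hcl hτ)
      simpa using this
    obtain ⟨j1, hj1, hFz, hgv⟩ :=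
      ih (A.erase j0) (Finset.erase_ssubset hj0A) z v hzv.le hzsel
    refine ⟨j1, Finset.erase_subset _ _ hj1, ?_, hgv⟩
    -- slope argument: g j1 ≥ g j0 at z, g j1 < g j0 at v ⇒ g j1 ≥ g j0 at u ≤ z
    obtain ⟨c0, d0, h0⟩ := hg j0
    obtain ⟨c1, d1, h1⟩ := hg j1
    have e1 : c0 + d0 * z ≤ c1 + d1 * z := by
      have h' : g j0 z ≤ g j1 z := by rw [← hzeq]; exact hFz
      rw [h0, h1] at h'; exact h'
    have e2 : c1 + d1 * v < c0 + d0 * v := by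
      have h' : g j1 v < g j0 v := lt_of_le_of_lt hgv hv
      rw [h0, h1] at h'; exact h'
    have hd : d1 - d0 < 0 := by nlinarith [hzv]
    have hu : (d1 - d0) * u ≥ (d1 - d0) * z :=
      mul_le_mul_of_nonpos_left hzIcc.1 hd.le
    have : c0 + d0 * u ≤ c1 + d1 * u := by nlinarith
    rw [hj0, h0 u, h1 u]
    exact this





lemma trunc_step (p q : ℝ) (hq0 : 0 ≤ q) (hq1 : q ≤ 1) :
    max (min (min (max p 0) 1 + q) 1 + min (max (p+1) 0) 1 - 1) 0
      = min (max (p+q) 0) 1 := by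
  rcases le_total p (-1) with h1 | h1
  · rw [max_eq_right (by linarith : p ≤ (0:ℝ)), max_eq_right (by linarith : p + 1 ≤ (0:ℝ))]
    rw [min_eq_left (by norm_num : (0:ℝ) ≤ 1), zero_add, min_eq_left hq1]
    rw [max_eq_right (by linarith : q + 0 - 1 ≤ (0:ℝ))]
    rw [max_eq_right (by linarith : p + q ≤ (0:ℝ))]
    simp
  · rcases le_total p 0 with h2 | h2
    · rw [max_eq_right h2, min_eq_left (by norm_num : (0:ℝ) ≤ 1), zero_add, min_eq_left hq1,
        max_eq_left (by linarith : (0:ℝ) ≤ p + 1), min_eq_left (by linarith : p + 1 ≤ 1)]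
      rw [show q + (p+1) - 1 = p + q by ring]
      rw [min_eq_left (max_le (by linarith) (by norm_num))]
    · rw [max_eq_left h2, max_eq_left (by linarith : (0:ℝ) ≤ p + 1),
        min_eq_right (by linarith : (1:ℝ) ≤ p + 1)]
      rw [max_eq_left (by linarith : (0:ℝ) ≤ p + q)]
      rcases le_total p 1 with h3 | h3
      · rw [min_eq_left h3]
        rw [show min (p + q) 1 + 1 - 1 = min (p+q) 1 by ring]
        rw [max_eq_left (le_min (by linarith) (by norm_num))]
      · rw [min_eq_right h3]
        rw [min_eq_right (by linarith : (1:ℝ) ≤ 1 + q)]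
        rw [min_eq_right (by linarith : (1:ℝ) ≤ p + q)]
        norm_num

lemma trunc_neg (t : ℝ) : 1 - min (max (1 - t) 0) 1 = min (max t 0) 1 := by
  rcases le_total t 0 with h | h
  · rw [max_eq_right h, max_eq_left (by linarith : (0:ℝ) ≤ 1 - t),
      min_eq_right (by linarith : (1:ℝ) ≤ 1 - t), min_eq_left (by norm_num : (0:ℝ) ≤ 1)]
    norm_num
  · rcases le_total t 1 with h' | h'
    · rw [max_eq_left h, min_eq_left h', max_eq_left (by linarith : (0:ℝ) ≤ 1 - t),
        min_eq_left (by linarith : 1 - t ≤ 1)]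
      ring
    · rw [max_eq_left h, min_eq_right h', max_eq_right (by linarith : 1 - t ≤ 0),
        min_eq_left (by norm_num : (0:ℝ) ≤ 1)]
      norm_num



section Trunc

variable {n : ℕ} {B : Set (Cube n → ℝ)}

/-- the `k`-th coordinate projection on the cube. -/
def proj (n : ℕ) (k : Fin n) : Cube n → ℝ := fun x => (x : Fin n → ℝ) k

lemma cube_coord_mem (x : Cube n) (k : Fin n) :
    0 ≤ (x : Fin n → ℝ) k ∧ (x : Fin n → ℝ) k ≤ 1 := x.2 k

/-- Key lemma: the truncation of any integer affine function belongs to any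
MV-closed set containing the coordinate projections. -/
lemma good_trunc (hB : MVClosed B) (hπ : ∀ k : Fin n, Good B (proj n k))
    (b : ℤ) (m : Fin n → ℤ) :
    Good B (fun x : Cube n =>
      min (max ((b:ℝ) + ∑ j, (m j : ℝ) * (x : Fin n → ℝ) j) 0) 1) := by
  classical
  suffices H : ∀ s : ℕ, ∀ b : ℤ, ∀ m : Fin n → ℤ, (∑ j, (m j).natAbs) = s →
      Good B (fun x : Cube n =>
        min (max ((b:ℝ) + ∑ j, (m j : ℝ) * (x : Fin n → ℝ) j) 0) 1) from H _ b m rfl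
  intro s
  induction s using Nat.strong_induction_on with
  | _ s ih =>
    have hpos : ∀ b : ℤ, ∀ m : Fin n → ℤ, (∑ j, (m j).natAbs) = s → (∃ k, 0 < m k) →
        Good B (fun x : Cube n =>
          min (max ((b:ℝ) + ∑ j, (m j : ℝ) * (x : Fin n → ℝ) j) 0) 1) := by
      rintro b m hm ⟨k, hk⟩
      set m' : Fin n → ℤ := Function.update m k (m k - 1) with hm'def
      have hs1 : 1 ≤ s := by
        have h1 := Finset.single_le_sum (f := fun j => (m j).natAbs)
          (fun i _ => Nat.zero_le _) (Finset.mem_univ k)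
        have h1' : (m k).natAbs ≤ s := by rw [← hm]; simpa using h1
        omega
      have hsum' : (∑ j, (m' j).natAbs) = s - 1 := by
        have h1 : (m' k).natAbs + ∑ j ∈ Finset.univ.erase k, (m' j).natAbs
            = ∑ j, (m' j).natAbs :=
          Finset.add_sum_erase Finset.univ (fun j => (m' j).natAbs) (Finset.mem_univ k)
        have h2 : (m k).natAbs + ∑ j ∈ Finset.univ.erase k, (m j).natAbs
            = ∑ j, (m j).natAbs :=
          Finset.add_sum_erase Finset.univ (fun j => (m j).natAbs) (Finset.mem_univ k)
        have h3 : ∀ j ∈ Finset.univ.erase k, (m' j).natAbs = (m j).natAbs := by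
          intro j hj
          rw [hm'def, Function.update_of_ne (Finset.mem_erase.mp hj).1]
        rw [Finset.sum_congr rfl h3] at h1
        have h4 : (m' k).natAbs = (m k).natAbs - 1 := by
          rw [hm'def, Function.update_self]; omega
        omega
      have hdecomp : ∀ x : Fin n → ℝ,
          (b:ℝ) + ∑ j, (m j : ℝ) * x j
            = ((b:ℝ) + ∑ j, (m' j : ℝ) * x j) + x k := by
        intro x
        have hsplit : ∀ j : Fin n, (m j : ℝ) * x j
            = (m' j : ℝ) * x j + (if k = j then x j else 0) := by
          intro j
          by_cases hkj : k = j
          · subst hkj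
            rw [if_pos rfl, hm'def, Function.update_self]
            push_cast; ring
          · rw [if_neg hkj, hm'def, Function.update_of_ne (Ne.symm hkj)]
            ring
        rw [Finset.sum_congr rfl (fun j _ => hsplit j), Finset.sum_add_distrib,
          Finset.sum_ite_eq Finset.univ k (fun j => x j), if_pos (Finset.mem_univ k)]
        ring
      have T1 := ih (s-1) (by omega) b m' hsum'
      have T2 := ih (s-1) (by omega) (b+1) m' hsum'
      have G1 := good_add hB T1 (hπ k)
      have G2 := good_odot hB G1 T2
      convert G2 using 1
      funext x
      simp only [proj]
      have hx := cube_coord_mem x k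
      have e1 : (((b+1 : ℤ)):ℝ) + ∑ j, (m' j : ℝ) * (x : Fin n → ℝ) j
          = ((b:ℝ) + ∑ j, (m' j : ℝ) * (x : Fin n → ℝ) j) + 1 := by push_cast; ring
      have e2 := hdecomp (x : Fin n → ℝ)
      rw [e2, e1]
      exact (trunc_step ((b:ℝ) + ∑ j, (m' j : ℝ) * (x : Fin n → ℝ) j)
        ((x : Fin n → ℝ) k) hx.1 hx.2).symm
    intro b m hm
    by_cases hz : ∀ k, m k = 0
    · have heqf : (fun x : Cube n =>
          min (max ((b:ℝ) + ∑ j, (m j : ℝ) * (x : Fin n → ℝ) j) 0) 1)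
          = fun _ => min (max (b:ℝ) 0) 1 := by
        funext x; simp [hz]
      rw [heqf]
      rcases le_or_gt b 0 with hb | hb
      · have hmax : max (b:ℝ) 0 = 0 := max_eq_right (by exact_mod_cast hb)
        have hmin : min (0:ℝ) 1 = 0 := by norm_num
        rw [hmax, hmin]
        exact good_zero hB
      · have hmax : max (b:ℝ) 0 = b := max_eq_left (by positivity)
        have hmin : min (b:ℝ) 1 = 1 := min_eq_right (by exact_mod_cast hb)
        rw [hmax, hmin]
        exact good_one hB
    · by_cases hp : ∃ k, 0 < m k
      · exact hpos b m hm hp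
      · push_neg at hz hp
        obtain ⟨k0, hk0⟩ := hz
        have hneg := hpos (1 - b) (-m)
          (by simp only [Pi.neg_apply, Int.natAbs_neg]; exact hm)
          ⟨k0, by have := hp k0; simp only [Pi.neg_apply]; omega⟩
        have G := good_neg hB hneg
        convert G using 1
        funext x
        have e : ((1 - b : ℤ):ℝ) + ∑ j, ((-m) j : ℝ) * (x : Fin n → ℝ) j
            = 1 - ((b:ℝ) + ∑ j, (m j : ℝ) * (x : Fin n → ℝ) j) := by
          have h1 : ∀ j : Fin n, ((-m) j : ℝ) * (x : Fin n → ℝ) j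
              = -((m j : ℝ) * (x : Fin n → ℝ) j) := by
            intro j; simp [Pi.neg_apply]
          rw [Finset.sum_congr rfl (fun j _ => h1 j), Finset.sum_neg_distrib]
          push_cast; ring
        rw [e, trunc_neg]

end Trunc

section Rep

variable {n : ℕ} {B : Set (Cube n → ℝ)}

/-- clamp to `[0,1]`. -/
private def clmp (τ : ℝ) : ℝ := max 0 (min τ 1)

private lemma clmp_mem (τ : ℝ) : 0 ≤ clmp τ ∧ clmp τ ≤ 1 :=
  ⟨le_max_left _ _, max_le (by norm_num) (min_le_right _ _)⟩

private lemma clmp_eq {τ : ℝ} (h : τ ∈ Set.Icc (0:ℝ) 1) : clmp τ = τ := by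
  rw [clmp, min_eq_left h.2, max_eq_right h.1]

private lemma clmp_cont : Continuous clmp :=
  continuous_const.max (continuous_id.min continuous_const)

/-- the segment from `y` to `x` inside the cube, with clamped parameter. -/
private def seg (y x : Cube n) (τ : ℝ) : Cube n :=
  ⟨fun i => (1 - clmp τ) * (y : Fin n → ℝ) i + clmp τ * (x : Fin n → ℝ) i, by
    intro i
    have hy := y.2 i; have hx := x.2 i; have hc := clmp_mem τ
    refine ⟨show (0:ℝ) ≤ (1 - clmp τ) * (y : Fin n → ℝ) i + clmp τ * (x : Fin n → ℝ) i from ?_,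
      show (1 - clmp τ) * (y : Fin n → ℝ) i + clmp τ * (x : Fin n → ℝ) i ≤ 1 from ?_⟩
    · have h1 : 0 ≤ (1 - clmp τ) * (y : Fin n → ℝ) i :=
        mul_nonneg (by linarith [hc.2]) hy.1
      have h2 : 0 ≤ clmp τ * (x : Fin n → ℝ) i := mul_nonneg hc.1 hx.1
      linarith
    · have h1 : (1 - clmp τ) * (y : Fin n → ℝ) i ≤ (1 - clmp τ) * 1 :=
        mul_le_mul_of_nonneg_left hy.2 (by linarith [hc.2])
      have h2 : clmp τ * (x : Fin n → ℝ) i ≤ clmp τ * 1 :=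
        mul_le_mul_of_nonneg_left hx.2 hc.1
      nlinarith⟩

private lemma seg_cont (y x : Cube n) : Continuous (seg y x) := by
  apply Continuous.subtype_mk
  exact continuous_pi fun i =>
    ((continuous_const.sub clmp_cont).mul continuous_const).add
      (clmp_cont.mul continuous_const)

private lemma seg_coe {y x : Cube n} {τ : ℝ} (h : τ ∈ Set.Icc (0:ℝ) 1) :
    ((seg y x τ : Cube n) : Fin n → ℝ)
      = fun i => (1 - τ) * (y : Fin n → ℝ) i + τ * (x : Fin n → ℝ) i := by
  funext i
  simp only [seg]
  rw [clmp_eq h]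

/-- Main representation step: every McNaughton function belongs to every
MV-closed set of functions containing the coordinate projections. -/
lemma mcnaughton_mem (hB : MVClosed B) (hπ : ∀ k : Fin n, Good B (proj n k))
    {f : Cube n → ℝ} (hf : IsMcNaughton f) : f ∈ B := by
  classical
  obtain ⟨hcont, hbdd, t, l, hl, hsel⟩ := hf
  -- truncations of the pieces are Good
  have hT : ∀ j : Fin t, Good B (fun x : Cube n => min (max (l j (x : Fin n → ℝ)) 0) 1) := by
    intro j
    obtain ⟨b, m, hbm⟩ := hl j
    have := good_trunc hB hπ b m
    convert this using 1
    funext x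
    rw [hbm]
  set x₀ : Cube n := ⟨fun _ => 1/2, fun i => by norm_num⟩ with hx₀
  set J : Cube n → Finset (Fin t) :=
    fun y => Finset.univ.filter (fun j => f y ≤ l j ↑y) with hJ
  set 𝒮 : Finset (Finset (Fin t)) :=
    Finset.univ.powerset.filter
      (fun S => ∃ y : Cube n, ∀ j, j ∈ S ↔ f y ≤ l j ↑y) with h𝒮
  have hJ𝒮 : ∀ y : Cube n, J y ∈ 𝒮 := by
    intro y
    rw [h𝒮, Finset.mem_filter]
    exact ⟨Finset.mem_powerset.mpr (Finset.subset_univ _),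
      ⟨y, fun j => by simp [hJ]⟩⟩
  have h𝒮ne : 𝒮.Nonempty := ⟨J x₀, hJ𝒮 x₀⟩
  have hSne : ∀ S ∈ 𝒮, S.Nonempty := by
    intro S hS
    rw [h𝒮, Finset.mem_filter] at hS
    obtain ⟨y, hy⟩ := hS.2
    obtain ⟨j, hj⟩ := hsel y
    exact ⟨j, (hy j).mpr hj.le⟩
  set TF : Finset (Fin t) → Cube n → ℝ := fun S x =>
    if hS : S.Nonempty then S.inf' hS (fun j => min (max (l j (x : Fin n → ℝ)) 0) 1)
    else 0 with hTFdef
  have hTF : ∀ S ∈ 𝒮, Good B (TF S) := by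
    intro S hS
    have hne := hSne S hS
    have : TF S = fun x : Cube n => S.inf' hne (fun j => min (max (l j (x : Fin n → ℝ)) 0) 1) := by
      funext x; rw [hTFdef]; exact dif_pos hne
    rw [this]
    exact good_inf' hB S hne _ (fun j _ => hT j)
  have hH : Good B (fun x => 𝒮.sup' h𝒮ne (fun S => TF S x)) :=
    good_sup' hB 𝒮 h𝒮ne TF hTF
  have hfeq : f = fun x => 𝒮.sup' h𝒮ne (fun S => TF S x) := by
    funext x
    apply le_antisymm
    · -- f x ≤ sup'
      have h1 : TF (J x) x ≤ 𝒮.sup' h𝒮ne (fun S => TF S x) :=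
        Finset.le_sup' (fun S => TF S x) (hJ𝒮 x)
      refine le_trans ?_ h1
      have hne := hSne (J x) (hJ𝒮 x)
      rw [hTFdef]
      simp only [dif_pos hne]
      apply Finset.le_inf' hne
      intro j hj
      rw [hJ, Finset.mem_filter] at hj
      exact le_min (le_max_of_le_left hj.2) (hbdd x).2
    · -- sup' ≤ f x
      apply Finset.sup'_le
      intro S hS
      rw [h𝒮, Finset.mem_filter] at hS
      obtain ⟨y, hy⟩ := hS.2
      -- two-point lemma along the segment from y to x
      set g : Fin t → ℝ → ℝ := fun j τ =>
        l j (fun i => (1 - τ) * (y : Fin n → ℝ) i + τ * (x : Fin n → ℝ) i) with hg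
      have hgaff : ∀ j, ∃ c d : ℝ, ∀ τ, g j τ = c + d * τ := by
        intro j
        obtain ⟨b, m, hbm⟩ := hl j
        refine ⟨(b:ℝ) + ∑ i, (m i : ℝ) * (y : Fin n → ℝ) i,
          ∑ i, (m i : ℝ) * ((x : Fin n → ℝ) i - (y : Fin n → ℝ) i), fun τ => ?_⟩
        rw [hg]
        simp only []
        rw [hbm]
        have hterm : ∀ i : Fin n, (m i : ℝ) *
            ((1 - τ) * (y : Fin n → ℝ) i + τ * (x : Fin n → ℝ) i)
            = (m i : ℝ) * (y : Fin n → ℝ) i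
              + ((m i : ℝ) * ((x : Fin n → ℝ) i - (y : Fin n → ℝ) i)) * τ := by
          intro i; ring
        rw [Finset.sum_congr rfl (fun i _ => hterm i), Finset.sum_add_distrib,
          ← Finset.sum_mul]
        ring
      have hFcont : Continuous (fun τ => f (seg y x τ)) := hcont.comp (seg_cont y x)
      have hFsel : ∀ τ ∈ Set.Icc (0:ℝ) 1, ∃ j ∈ (Finset.univ : Finset (Fin t)),
          f (seg y x τ) = g j τ := by
        intro τ hτ
        obtain ⟨j, hj⟩ := hsel (seg y x τ)
        refine ⟨j, Finset.mem_univ j, ?_⟩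
        rw [hj, hg]
        simp only []
        rw [seg_coe hτ]
      obtain ⟨j, _, h0, h1⟩ := two_point g hgaff (fun τ => f (seg y x τ)) hFcont
        Finset.univ 0 1 (by norm_num) hFsel
      -- translate endpoint values
      have hseg0 : seg y x 0 = y := by
        apply Subtype.ext
        rw [seg_coe (by norm_num : (0:ℝ) ∈ Set.Icc (0:ℝ) 1)]
        funext i; ring
      have hseg1 : seg y x 1 = x := by
        apply Subtype.ext
        rw [seg_coe (by norm_num : (1:ℝ) ∈ Set.Icc (0:ℝ) 1)]
        funext i; ring
      have hg0 : g j 0 = l j ↑y := by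
        rw [hg]; simp only []
        congr 1
        funext i; ring
      have hg1 : g j 1 = l j ↑x := by
        rw [hg]; simp only []
        congr 1
        funext i; ring
      have hjS : j ∈ S := by
        apply (hy j).mpr
        rw [← hg0]
        calc f y = f (seg y x 0) := by rw [hseg0]
        _ ≤ g j 0 := h0
      have hlx : l j ↑x ≤ f x := by
        rw [← hg1]
        calc g j 1 ≤ f (seg y x 1) := h1
        _ = f x := by rw [hseg1]
      have hne := hSne S (by rw [h𝒮, Finset.mem_filter]; exact ⟨Finset.mem_powerset.mpr (Finset.subset_univ _), ⟨y, hy⟩⟩)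
      rw [hTFdef]
      simp only [dif_pos hne]
      calc S.inf' hne (fun j => min (max (l j (x : Fin n → ℝ)) 0) 1)
          ≤ min (max (l j ↑x) 0) 1 := Finset.inf'_le _ hjS
        _ ≤ max (l j ↑x) 0 := min_le_left _ _
        _ ≤ f x := max_le hlx (hbdd x).1
  rw [hfeq]
  exact hH.1

end Rep

section Geom

variable {n : ℕ}

lemma den_spec {v : Fin n → ℝ} (hv : IsRatPoint v) :
    0 < den v ∧ ∀ i, ∃ c : ℤ, ((den v : ℕ) : ℝ) * v i = c := by
  have hne : {d : ℕ | 0 < d ∧ ∀ i, ∃ c : ℤ, (d:ℝ) * v i = c}.Nonempty := by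
    choose q hq using hv
    refine ⟨∏ i, (q i).den, Finset.prod_pos (fun i _ => (q i).pos), fun i => ?_⟩
    obtain ⟨k, hk⟩ := Finset.dvd_prod_of_mem (fun i => (q i).den) (Finset.mem_univ i)
    refine ⟨(q i).num * k, ?_⟩
    rw [hq i, hk]
    have hden : ((q i).den : ℝ) ≠ 0 := by exact_mod_cast (q i).den_nz
    rw [Rat.cast_def]
    push_cast
    field_simp
  exact Nat.sInf_mem hne

lemma mem_vertexSet_iff {Δ : Finset (Finset (Fin n → ℝ))} {v : Fin n → ℝ} :
    v ∈ vertexSet Δ ↔ ∃ S ∈ Δ, v ∈ S := by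
  letI := Classical.decEq (Fin n → ℝ)
  unfold vertexSet
  rw [Finset.mem_sup]
  simp

lemma subset_vertexSet {Δ : Finset (Finset (Fin n → ℝ))} {S : Finset (Fin n → ℝ)}
    (hS : S ∈ Δ) : ∀ v ∈ S, v ∈ vertexSet Δ :=
  fun v hv => mem_vertexSet_iff.mpr ⟨S, hS, hv⟩

/-- evaluation of a real affine function on a convex combination. -/
lemma affine_comb {l : (Fin n → ℝ) → ℝ} (hl : IsRealAffine l)
    (S : Finset (Fin n → ℝ)) (w : (Fin n → ℝ) → ℝ) (hw : ∑ y ∈ S, w y = 1) :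
    l (∑ y ∈ S, w y • y) = ∑ y ∈ S, w y * l y := by
  obtain ⟨b, m, hbm⟩ := hl
  rw [hbm]
  have hcoord : ∀ j, (∑ y ∈ S, w y • y) j = ∑ y ∈ S, w y * y j := by
    intro j
    rw [Finset.sum_apply]
    simp [smul_eq_mul]
  have hR : ∑ y ∈ S, w y * l y = b + ∑ j, m j * ∑ y ∈ S, w y * y j := by
    have h1 : ∀ y ∈ S, w y * l y = w y * b + ∑ j, m j * (w y * y j) := by
      intro y _
      rw [hbm, mul_add, Finset.mul_sum]
      congr 1
      exact Finset.sum_congr rfl (fun j _ => by ring)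
    rw [Finset.sum_congr rfl h1, Finset.sum_add_distrib, ← Finset.sum_mul, hw,
      one_mul, Finset.sum_comm]
    congr 1
    refine Finset.sum_congr rfl (fun j _ => ?_)
    rw [Finset.mul_sum]
  rw [hR]
  congr 1
  exact Finset.sum_congr rfl (fun j _ => by rw [hcoord j])

/-- With all weights equal to 1, the coordinate projections are generated by
the hats. -/
lemma proj_good {B : Set (Cube n → ℝ)} (hB : MVClosed B)
    (Δ : Finset (Finset (Fin n → ℝ))) (a : (Fin n → ℝ) → ℕ)
    (h : (Fin n → ℝ) → Cube n → ℝ)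
    (hW : IsWeighted Δ a) (hH : IsHatFamily Δ a h)
    (hone : ∀ v ∈ vertexSet Δ, a v = 1)
    (hhat : ∀ v ∈ vertexSet Δ, h v ∈ B) :
    ∀ k : Fin n, Good B (proj n k) := by
  classical
  intro k
  obtain ⟨hTri, hwt⟩ := hW
  -- basic vertex facts
  have hvert : ∀ v ∈ vertexSet Δ, v ∈ Cube n ∧ IsRatPoint v := by
    intro v hv
    obtain ⟨S, hSΔ, hvS⟩ := mem_vertexSet_iff.mp hv
    exact (hTri.1 S hSΔ).2.1 v hvS
  -- choose natural coefficients
  have hcex : ∀ v : {v // v ∈ vertexSet Δ}, ∃ cv : ℕ,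
      (cv : ℝ) = ((den v.1 : ℕ) : ℝ) * v.1 k := by
    rintro ⟨v, hv⟩
    show ∃ cv : ℕ, (cv : ℝ) = ((den v : ℕ) : ℝ) * v k
    obtain ⟨hcube, hrat⟩ := hvert v hv
    obtain ⟨hdpos, hdint⟩ := den_spec hrat
    obtain ⟨c, hc⟩ := hdint k
    have hc0 : (0:ℝ) ≤ (c:ℝ) := by
      rw [← hc]
      exact mul_nonneg (by positivity) (hcube k).1
    refine ⟨c.toNat, ?_⟩
    rw [hc]
    have hcn : (c.toNat : ℤ) = c := Int.toNat_of_nonneg (by exact_mod_cast hc0)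
    exact_mod_cast congrArg (fun z : ℤ => (z : ℝ)) hcn
  choose cfun hcfun using hcex
  -- hat values at vertices
  have hhatval : ∀ v ∈ vertexSet Δ, ∀ y ∈ vertexSet Δ, ∀ (hy : y ∈ Cube n),
      h v ⟨y, hy⟩ = if y = v then 1 / (den v : ℝ) else 0 := by
    intro v hv y hy hycube
    have hisHat := hH v hv
    by_cases hyv : y = v
    · rw [if_pos hyv]
      have := hisHat.2.2.1 ⟨y, hycube⟩ hyv
      rw [this, hone v hv]
      norm_num
    · rw [if_neg hyv]
      exact hisHat.2.2.2 ⟨y, hycube⟩ hy hyv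
  -- the sum identity
  have hid : ∀ x : Cube n,
      (∑ v ∈ (vertexSet Δ).attach, (cfun v : ℝ) * h v.1 x) = (x : Fin n → ℝ) k := by
    intro x
    have hxU : (x : Fin n → ℝ) ∈ ⋃ S ∈ Δ, convexHull ℝ (S : Set (Fin n → ℝ)) := by
      rw [hTri.2.1]; exact x.2
    obtain ⟨S, hSΔ, hxS⟩ := Set.mem_iUnion₂.mp hxU
    have hxS2 := hxS
    rw [Finset.convexHull_eq] at hxS2
    obtain ⟨w, hw0, hw1, hwx⟩ := hxS2
    have hxrep : (x : Fin n → ℝ) = ∑ y ∈ S, w y • y := by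
      rw [← hwx, Finset.centerMass_eq_of_sum_1 _ id hw1]
      rfl
    have hScube : ∀ y ∈ S, y ∈ Cube n := fun y hy => ((hTri.1 S hSΔ).2.1 y hy).1
    have hSvert : ∀ y ∈ S, y ∈ vertexSet Δ := subset_vertexSet hSΔ
    -- value of each hat at x
    have hval : ∀ v ∈ vertexSet Δ,
        h v x = if v ∈ S then w v * (1 / (den v : ℝ)) else 0 := by
      intro v hv
      obtain ⟨lv, hlvaff, hlveq⟩ := (hH v hv).2.1 S hSΔ
      have h1 : h v x = lv (x : Fin n → ℝ) := hlveq x hxS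
      have h2 : lv (x : Fin n → ℝ) = ∑ y ∈ S, w y * lv y := by
        rw [hxrep]
        exact affine_comb hlvaff S w hw1
      have h3 : ∀ y ∈ S, lv y = if y = v then 1 / (den v : ℝ) else 0 := by
        intro y hy
        have hycube := hScube y hy
        have : lv y = h v ⟨y, hycube⟩ := by
          have := hlveq ⟨y, hycube⟩ (subset_convexHull ℝ (S : Set (Fin n → ℝ)) hy)
          exact this.symm
        rw [this]
        exact hhatval v hv y (hSvert y hy) hycube
      rw [h1, h2]
      have h4 : ∀ y ∈ S, w y * lv y = if y = v then w y * (1 / (den v : ℝ)) else 0 := by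
        intro y hy
        rw [h3 y hy, mul_ite, mul_zero]
      rw [Finset.sum_congr rfl h4,
        Finset.sum_ite_eq' S v (fun y => w y * (1 / (den v : ℝ)))]
    -- now compute the total sum
    have hterm : ∀ v : {v // v ∈ vertexSet Δ},
        (cfun v : ℝ) * h v.1 x = if v.1 ∈ S then w v.1 * v.1 k else 0 := by
      rintro ⟨v, hv⟩
      rw [hval v hv]
      by_cases hvS : v ∈ S
      · rw [if_pos hvS, if_pos hvS, hcfun ⟨v, hv⟩]
        have hdpos : 0 < den v := (den_spec (hvert v hv).2).1
        have : ((den v : ℕ) : ℝ) ≠ 0 := by positivity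
        field_simp
      · rw [if_neg hvS, if_neg hvS, mul_zero]
    rw [Finset.sum_congr rfl (fun v _ => hterm v)]
    have hsum1 : (∑ v ∈ (vertexSet Δ).attach,
        if v.1 ∈ S then w v.1 * v.1 k else 0)
        = ∑ v ∈ vertexSet Δ, (if v ∈ S then w v * v k else 0) := by
      rw [← Finset.sum_attach (vertexSet Δ) (fun v => if v ∈ S then w v * v k else 0)]
    rw [hsum1, Finset.sum_ite_mem, Finset.inter_eq_right.mpr
      (fun y hy => hSvert y hy)]
    have : (x : Fin n → ℝ) k = ∑ y ∈ S, w y * y k := by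
      rw [hxrep, Finset.sum_apply]
      simp [smul_eq_mul]
    rw [this]
  -- nonnegativity of the terms
  have hnonneg : ∀ (v : {v // v ∈ vertexSet Δ}) (x : Cube n),
      0 ≤ (cfun v : ℝ) * h v.1 x :=
    fun v x => mul_nonneg (by positivity) ((hH v.1 v.2).1 x).1
  -- each scaled hat is Good
  have hGood : ∀ v ∈ (vertexSet Δ).attach,
      Good B (fun x => (cfun v : ℝ) * h v.1 x) := by
    intro v _
    apply good_nsmul hB ⟨hhat v.1 v.2, (hH v.1 v.2).1⟩
    intro x
    calc (cfun v : ℝ) * h v.1 x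
        ≤ ∑ u ∈ (vertexSet Δ).attach, (cfun u : ℝ) * h u.1 x :=
          Finset.single_le_sum (fun u _ => hnonneg u x) (Finset.mem_attach _ v)
      _ = (x : Fin n → ℝ) k := hid x
      _ ≤ 1 := (x.2 k).2
  have hsum := good_sum hB (vertexSet Δ).attach _ hGood
    (fun x => by rw [hid x]; exact (x.2 k).2)
  have : (fun x : Cube n => ∑ v ∈ (vertexSet Δ).attach, (cfun v : ℝ) * h v.1 x)
      = proj n k := by
    funext x
    rw [hid x]
    rfl
  rwa [this] at hsum

end Geom
/-- If `A` is a finitely generated separating subalgebra of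
`M([0,1]^n)` distinct from `M([0,1]^n)`, then every weighted triangulation whose
basic set of hats generates `A` has some weight `a_j ≠ 1`. -/
theorem basic_generating_set_has_nontrivial_weight (n : ℕ) (A : Set (Cube n → ℝ))
    (hsub : A ⊆ McNn n) (hclosed : MVClosed A)
    (hfg : ∃ S : Set (Cube n → ℝ), S.Finite ∧ A = mvGen S)
    (hsep : Separates A) (hne : A ≠ McNn n) :
    ∀ (Δ : Finset (Finset (Fin n → ℝ))) (a : (Fin n → ℝ) → ℕ)
      (h : (Fin n → ℝ) → Cube n → ℝ),
      IsWeighted Δ a → IsHatFamily Δ a h →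
      (∀ v ∈ vertexSet Δ, IsMcNaughton (h v)) →
      A = mvGen (hatSet Δ h) →
      ∃ v ∈ vertexSet Δ, a v ≠ 1 := by
  intro Δ a h hW hH hMc hgen
  by_contra hex
  push_neg at hex
  apply hne
  apply Set.Subset.antisymm hsub
  intro f hf
  rw [hgen]
  refine Set.mem_sInter.mpr ?_
  rintro B ⟨hBc, hBsub⟩
  have hhat : ∀ v ∈ vertexSet Δ, h v ∈ B := by
    intro v hv
    exact hBsub ⟨v, Finset.mem_coe.mpr hv, rfl⟩
  have hπ := proj_good hBc Δ a h hW hH hex hhat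
  exact mcnaughton_mem hBc hπ hf

end MVPaper
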